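/- Let d ≥ 1 and let P be the d×d matrix with P_{i,i+1} = 1/2 for 1 ≤ i ≤ d−1, P_{i,i−1} = 1/2 for 2 ≤ i ≤ d, and all other entries 0, and set R = I − Pᵀ. Let b_i = (R⁻¹)_{i1} for 1 ≤ i ≤ d. Then: (i) b_i = 2(1 − i/(d+1)) > 0 for every i; (ii) the row sums of R⁻¹ are ∑_{j=1}^d (R⁻¹)_{ij} = i(d + 1 − i) for every 1 ≤ i ≤ d; and (iii) max_{1 ≤ i ≤ d} (1/b_i) ∑_{j=1}^d (R⁻¹)_{ij} √2 = d(d+1)/√2. -/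

import Mathlib

open Matrix


/-- Explicit inverse entries (0-based indices, extended to ℤ). -/
noncomputable def Gfun (d : ℕ) (a b : ℤ) : ℝ :=
  2 * (((min a b : ℤ) : ℝ) + 1) * ((d : ℝ) - ((max a b : ℤ) : ℝ)) / ((d : ℝ) + 1)

lemma Gfun_neg (d : ℕ) (b : ℤ) (hb : 0 ≤ b) : Gfun d (-1) b = 0 := by
  have : min (-1) b = -1 := min_eq_left (by omega)
  simp [Gfun, this]

lemma Gfun_d (d : ℕ) (b : ℤ) (hb : b < d) : Gfun d d b = 0 := by
  have : max (d : ℤ) b = d := max_eq_left (by omega)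
  simp [Gfun, this]

lemma Gfun_key (d : ℕ) (i j : ℤ) (hi0 : 0 ≤ i) (hid : i < d) (hj0 : 0 ≤ j)
    (hjd : j < d) :
    Gfun d i j - (1/2) * Gfun d (i-1) j - (1/2) * Gfun d (i+1) j
      = if i = j then 1 else 0 := by
  have hd1 : (d : ℝ) + 1 ≠ 0 := by positivity
  rcases lt_trichotomy i j with h | h | h
  · rw [if_neg (by omega)]
    unfold Gfun
    rw [show min i j = i from min_eq_left (by omega),
        show min (i-1) j = i-1 from min_eq_left (by omega),
        show min (i+1) j = i+1 from min_eq_left (by omega),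
        show max i j = j from max_eq_right (by omega),
        show max (i-1) j = j from max_eq_right (by omega),
        show max (i+1) j = j from max_eq_right (by omega)]
    push_cast
    field_simp
    ring
  · subst h
    rw [if_pos rfl]
    unfold Gfun
    rw [show min i i = i from min_self i,
        show min (i-1) i = i-1 from min_eq_left (by omega),
        show min (i+1) i = i from min_eq_right (by omega),
        show max i i = i from max_self i,
        show max (i-1) i = i from max_eq_right (by omega),
        show max (i+1) i = i+1 from max_eq_left (by omega)]
    push_cast
    field_simp
    ring
  · rw [if_neg (by omega)]
    unfold Gfun
    rw [show min i j = j from min_eq_right (by omega),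
        show min (i-1) j = j from min_eq_right (by omega),
        show min (i+1) j = j from min_eq_right (by omega),
        show max i j = i from max_eq_left (by omega),
        show max (i-1) j = i-1 from max_eq_left (by omega),
        show max (i+1) j = i+1 from max_eq_left (by omega)]
    push_cast
    field_simp
    ring

lemma rowsum_aux (d : ℕ) (P R : Matrix (Fin d) (Fin d) ℝ)
    (hP : ∀ i j : Fin d, P i j =
      if (j : ℕ) = (i : ℕ) + 1 then 1/2 else if (i : ℕ) = (j : ℕ) + 1 then 1/2 else 0)
    (hR : R = 1 - Pᵀ) (f : ℤ → ℝ) (hneg : f (-1) = 0) (hfd : f d = 0) (i : Fin d) :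
    ∑ k : Fin d, R i k * f (k : ℕ)
      = f (i : ℕ) - (1/2) * f (((i : ℕ) : ℤ) - 1) - (1/2) * f (((i : ℕ) : ℤ) + 1) := by
  have hsplit : ∀ k : Fin d, R i k * f (k : ℕ) =
      (if k = i then f (k : ℕ) else 0)
      - (1/2) * (if (i : ℕ) = (k : ℕ) + 1 then f (k : ℕ) else 0)
      - (1/2) * (if (k : ℕ) = (i : ℕ) + 1 then f (k : ℕ) else 0) := by
    intro k
    subst hR
    simp only [Matrix.sub_apply, Matrix.one_apply, Matrix.transpose_apply, hP k i,
      Fin.ext_iff]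
    have := i.isLt; have := k.isLt
    split_ifs <;> (try (exfalso; omega)) <;> ring
  rw [Finset.sum_congr rfl (fun k _ => hsplit k)]
  rw [Finset.sum_sub_distrib, Finset.sum_sub_distrib, ← Finset.mul_sum, ← Finset.mul_sum,
    Finset.sum_ite_eq' Finset.univ i (fun k => f (k : ℕ)), if_pos (Finset.mem_univ i)]
  have h1 : ∑ k : Fin d, (if (i : ℕ) = (k : ℕ) + 1 then f (k : ℕ) else 0)
      = f (((i : ℕ) : ℤ) - 1) := by
    rcases Nat.eq_zero_or_pos (i : ℕ) with h | h
    · rw [Finset.sum_eq_zero (fun k _ => by rw [if_neg (by omega)])]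
      rw [h]; simpa using hneg.symm
    · have hlt : (i : ℕ) - 1 < d := by have := i.isLt; omega
      rw [Finset.sum_eq_single (⟨(i : ℕ) - 1, hlt⟩ : Fin d)]
      · rw [if_pos (by simp; omega)]
        congr 1
        simp only [Fin.val_mk]
        omega
      · intro k _ hk
        rw [if_neg (fun hc => hk (by simp [Fin.ext_iff]; omega))]
      · exact fun h => absurd (Finset.mem_univ _) h
  have h2 : ∑ k : Fin d, (if (k : ℕ) = (i : ℕ) + 1 then f (k : ℕ) else 0)
      = f (((i : ℕ) : ℤ) + 1) := by
    by_cases h : (i : ℕ) + 1 < d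
    · rw [Finset.sum_eq_single (⟨(i : ℕ) + 1, h⟩ : Fin d)]
      · rw [if_pos (by simp)]
        congr 1
      · intro k _ hk
        rw [if_neg (fun hc => hk (by simp [Fin.ext_iff]; omega))]
      · exact fun h => absurd (Finset.mem_univ _) h
    · have hi : (i : ℕ) + 1 = d := by have := i.isLt; omega
      rw [Finset.sum_eq_zero (fun k _ => by rw [if_neg (by have := k.isLt; omega)])]
      rw [show ((i : ℕ) : ℤ) + 1 = (d : ℤ) by omega]
      exact hfd.symm
  rw [h1, h2]

/-- For the symmetric Atlas reflection matrix: the first column of `R⁻¹` is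
`b_i = 2(1 - i/(d+1)) > 0`, row sums of `R⁻¹` equal `i(d+1-i)`, and
`max_i (1/b_i) ∑_j (R⁻¹)_{ij} √2 = d(d+1)/√2`. Indices of `Fin d` are 0-based, so the paper's
1-based index `i` corresponds to `(i : ℕ) + 1`. -/
theorem stmt8 (d : ℕ) (hd : 1 ≤ d)
    (P : Matrix (Fin d) (Fin d) ℝ)
    (hP : ∀ i j : Fin d, P i j =
      if (j : ℕ) = (i : ℕ) + 1 then 1/2 else if (i : ℕ) = (j : ℕ) + 1 then 1/2 else 0)
    (R : Matrix (Fin d) (Fin d) ℝ) (hR : R = 1 - Pᵀ) :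
    (∀ i : Fin d,
      R⁻¹ i ⟨0, hd⟩ = 2 * (1 - (((i : ℕ) : ℝ) + 1) / ((d : ℝ) + 1)) ∧
      0 < R⁻¹ i ⟨0, hd⟩) ∧
    (∀ i : Fin d, ∑ j, R⁻¹ i j = (((i : ℕ) : ℝ) + 1) * ((d : ℝ) - ((i : ℕ) : ℝ))) ∧
    (Finset.univ.sup' ⟨⟨0, hd⟩, Finset.mem_univ _⟩
        (fun i : Fin d => (1 / R⁻¹ i ⟨0, hd⟩) * ∑ j, R⁻¹ i j * Real.sqrt 2)
      = (d : ℝ) * ((d : ℝ) + 1) / Real.sqrt 2) := by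
  have hdpos : (0 : ℝ) < (d : ℝ) + 1 := by positivity
  set M : Matrix (Fin d) (Fin d) ℝ := fun i j => Gfun d ((i : ℕ) : ℤ) ((j : ℕ) : ℤ)
    with hMdef
  have hRM : R * M = 1 := by
    ext i j
    rw [Matrix.mul_apply]
    rw [rowsum_aux d P R hP hR (fun a => Gfun d a ((j : ℕ) : ℤ))
      (Gfun_neg d _ (Int.natCast_nonneg _)) (Gfun_d d _ (by exact_mod_cast j.isLt)) i]
    rw [Gfun_key d _ _ (Int.natCast_nonneg _) (by exact_mod_cast i.isLt)
      (Int.natCast_nonneg _) (by exact_mod_cast j.isLt)]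
    simp [Matrix.one_apply, Fin.ext_iff]
  have hMR : M * R = 1 := mul_eq_one_comm.mp hRM
  have hinv : R⁻¹ = M := Matrix.inv_eq_right_inv hRM
  -- part (i)
  have hb : ∀ i : Fin d, R⁻¹ i ⟨0, hd⟩ = 2 * ((d : ℝ) - ((i : ℕ) : ℝ)) / ((d : ℝ) + 1) := by
    intro i
    rw [hinv]
    show Gfun d ((i : ℕ) : ℤ) (((0 : ℕ) : ℤ)) = _
    unfold Gfun
    rw [min_eq_right (by exact_mod_cast Int.natCast_nonneg (i : ℕ)),
      max_eq_left (by exact_mod_cast Int.natCast_nonneg (i : ℕ))]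
    push_cast
    ring
  have hipos : ∀ i : Fin d, ((i : ℕ) : ℝ) < (d : ℝ) := fun i => by exact_mod_cast i.isLt
  have hbpos : ∀ i : Fin d, 0 < R⁻¹ i ⟨0, hd⟩ := by
    intro i
    rw [hb i]
    have := hipos i
    apply div_pos (by linarith) hdpos
  -- part (ii)
  have hW : ∀ i : Fin d, ∑ k : Fin d, R i k * (((((k : ℕ) : ℤ) : ℝ) + 1) *
      ((d : ℝ) - (((k : ℕ) : ℤ) : ℝ))) = 1 := by
    intro i
    rw [rowsum_aux d P R hP hR (fun a => ((a : ℝ) + 1) * ((d : ℝ) - (a : ℝ)))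
      (by norm_num) (by norm_num) i]
    push_cast
    ring
  have hsum : ∀ i : Fin d, ∑ j, R⁻¹ i j = (((i : ℕ) : ℝ) + 1) * ((d : ℝ) - ((i : ℕ) : ℝ)) := by
    intro i
    rw [hinv]
    have h0 : ∀ j : Fin d, M i j = ∑ k : Fin d, M i j *
        (R j k * (((((k : ℕ) : ℤ) : ℝ) + 1) * ((d : ℝ) - (((k : ℕ) : ℤ) : ℝ)))) := by
      intro j
      rw [← Finset.mul_sum, hW j, mul_one]
    calc ∑ j, M i j
        = ∑ j, ∑ k : Fin d, M i j *
            (R j k * (((((k : ℕ) : ℤ) : ℝ) + 1) * ((d : ℝ) - (((k : ℕ) : ℤ) : ℝ)))) :=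
          Finset.sum_congr rfl (fun j _ => h0 j)
      _ = ∑ k : Fin d, (∑ j, M i j * R j k) *
            (((((k : ℕ) : ℤ) : ℝ) + 1) * ((d : ℝ) - (((k : ℕ) : ℤ) : ℝ))) := by
          rw [Finset.sum_comm]
          exact Finset.sum_congr rfl (fun k _ => by
            rw [Finset.sum_mul]
            exact Finset.sum_congr rfl (fun j _ => (mul_assoc _ _ _).symm))
      _ = ∑ k : Fin d, (1 : Matrix (Fin d) (Fin d) ℝ) i k *
            (((((k : ℕ) : ℤ) : ℝ) + 1) * ((d : ℝ) - (((k : ℕ) : ℤ) : ℝ))) :=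
          Finset.sum_congr rfl (fun k _ => by rw [← Matrix.mul_apply, hMR])
      _ = (((i : ℕ) : ℝ) + 1) * ((d : ℝ) - ((i : ℕ) : ℝ)) := by
          simp [Matrix.one_apply, ite_mul]
  -- part (iii)
  have hfun : ∀ i : Fin d, (1 / R⁻¹ i ⟨0, hd⟩) * ∑ j, R⁻¹ i j * Real.sqrt 2
      = (((i : ℕ) : ℝ) + 1) * ((d : ℝ) + 1) * Real.sqrt 2 / 2 := by
    intro i
    rw [← Finset.sum_mul, hsum i, hb i]
    have hi := hipos i
    have hne : (d : ℝ) - ((i : ℕ) : ℝ) ≠ 0 := by linarith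
    field_simp
  have hsqrt : Real.sqrt 2 * Real.sqrt 2 = 2 := Real.mul_self_sqrt (by norm_num)
  have hspos : (0 : ℝ) < Real.sqrt 2 := by positivity
  have hrhs : (d : ℝ) * ((d : ℝ) + 1) / Real.sqrt 2
      = (d : ℝ) * ((d : ℝ) + 1) * Real.sqrt 2 / 2 := by
    rw [div_eq_div_iff hspos.ne' (by norm_num : (2 : ℝ) ≠ 0)]
    linear_combination (-((d : ℝ) * ((d : ℝ) + 1))) * hsqrt
  refine ⟨fun i => ⟨?_, hbpos i⟩, hsum, ?_⟩
  · rw [hb i]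
    field_simp
    ring
  · apply le_antisymm
    · apply Finset.sup'_le
      intro i _
      rw [hfun i, hrhs]
      have h1 : ((i : ℕ) : ℝ) + 1 ≤ (d : ℝ) := by
        have := i.isLt; exact_mod_cast this
      gcongr
    · refine le_trans ?_ (Finset.le_sup' _ (Finset.mem_univ (⟨d - 1, by omega⟩ : Fin d)))
      rw [hfun, hrhs]
      have h1 : (((d - 1 : ℕ) : ℝ)) + 1 = (d : ℝ) := by
        push_cast [Nat.cast_sub hd]
        ring
      simp only [Fin.val_mk]
      rw [h1]
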